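/- Let (G,D,⋆) be a probabilistic metric space with ⋆ continuous. Then the family Lip¹_⋆(G,Δ⁺) of all probabilistic 1-Lipschitz maps is uniformly equicontinuous: for all ε > 0 there exists η > 0 such that for every probabilistic 1-Lipschitz f and all x, y ∈ G, d_L(D(x,y), H₀) < η implies d_L(f(x), f(y)) < ε. -/

import Mathlib

open Filter Topology

noncomputable section

/-- `Δ⁺`: distribution functions `F : [-∞,∞] → [0,1]`, nondecreasing, left-continuous
on `ℝ`, with `F(-∞)=0`, `F(+∞)=1` and `F(0)=0`. -/
def IsDistFun (F : EReal → ℝ) : Prop :=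
  Monotone F ∧ (∀ t, F t ∈ Set.Icc (0:ℝ) 1) ∧
  (∀ x : ℝ, ContinuousWithinAt F (Set.Iio (x : EReal)) (x : EReal)) ∧
  F ⊥ = 0 ∧ F ⊤ = 1 ∧ F (0 : EReal) = 0

/-- The step function `H_a`. -/
def Hstep (a : ℝ) : EReal → ℝ := fun t => if t ≤ (a : EReal) then 0 else 1

/-- `H₀`. -/
def H0 : EReal → ℝ := Hstep 0

/-- `H_∞`. -/
def Hinf : EReal → ℝ := fun t => if t = ⊤ then 1 else 0

/-- The condition `A(F,G;h)` : for all `t ∈ (0,1/h)`, `G(t) ≤ F(t+h)+h`. -/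
def levyCond (F G : EReal → ℝ) (h : ℝ) : Prop :=
  ∀ t : ℝ, 0 < t → t < 1 / h → G (t : EReal) ≤ F ((t + h : ℝ) : EReal) + h

def levySet (F G : EReal → ℝ) : Set ℝ :=
  {h : ℝ | 0 < h ∧ h ≤ 1 ∧ levyCond F G h ∧ levyCond G F h}

/-- The modified Lévy distance. -/
def dL (F G : EReal → ℝ) : ℝ := sInf (levySet F G)

/-- Weak convergence: pointwise convergence at each (real) continuity point of the limit. -/
def WeakConv (F : ℕ → EReal → ℝ) (G : EReal → ℝ) : Prop :=
  ∀ t : ℝ, ContinuousAt G (t : EReal) →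
    Tendsto (fun n => F n (t : EReal)) atTop (𝓝 (G (t : EReal)))

abbrev TriOp := (EReal → ℝ) → (EReal → ℝ) → (EReal → ℝ)

/-- A triangle function on `Δ⁺`. -/
def IsTriangleFn (star : TriOp) : Prop :=
  (∀ F L, IsDistFun F → IsDistFun L → IsDistFun (star F L)) ∧
  (∀ F L, IsDistFun F → IsDistFun L → star F L = star L F) ∧
  (∀ F L K, IsDistFun F → IsDistFun L → IsDistFun K →
    star F (star L K) = star (star F L) K) ∧
  (∀ F, IsDistFun F → star F H0 = F) ∧
  (∀ F L K, IsDistFun F → IsDistFun L → IsDistFun K → F ≤ L → star F K ≤ star L K)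

/-- `⋆` is continuous with respect to weak convergence. -/
def StarContinuous (star : TriOp) : Prop :=
  ∀ (Fn Ln : ℕ → EReal → ℝ) (F L : EReal → ℝ),
    (∀ n, IsDistFun (Fn n)) → (∀ n, IsDistFun (Ln n)) →
    IsDistFun F → IsDistFun L →
    WeakConv Fn F → WeakConv Ln L →
    WeakConv (fun n => star (Fn n) (Ln n)) (star F L)

/-- `⋆` is sup-continuous. -/
def StarSupContinuous (star : TriOp) : Prop :=
  ∀ (I : Type) (_ : Nonempty I) (F : I → EReal → ℝ) (L : EReal → ℝ),
    (∀ i, IsDistFun (F i)) → IsDistFun L →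
    (fun t => ⨆ i, star (F i) L t) = star (fun t => ⨆ i, F i t) L

/-- A probabilistic metric space `(G, D, ⋆)`. -/
structure PMSpace (G : Type) where
  star : TriOp
  D : G → G → EReal → ℝ
  star_tri : IsTriangleFn star
  D_mem : ∀ p q, IsDistFun (D p q)
  D_eq_iff : ∀ p q, D p q = H0 ↔ p = q
  D_symm : ∀ p q, D p q = D q p
  D_tri : ∀ p q r, star (D p q) (D q r) ≤ D p r

/-- Probabilistic 1-Lipschitz map. -/
def PLip {G : Type} (M : PMSpace G) (f : G → EReal → ℝ) : Prop :=
  (∀ x, IsDistFun (f x)) ∧ ∀ x y, M.star (M.D x y) (f y) ≤ f x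

/-- Probabilistically continuous map. -/
def PCont {G : Type} (M : PMSpace G) (f : G → EReal → ℝ) : Prop :=
  (∀ x, IsDistFun (f x)) ∧
  ∀ (z : G) (zn : ℕ → G),
    WeakConv (fun n => M.D (zn n) z) H0 →
    WeakConv (fun n => f (zn n)) (f z)

/-- The uniform modified Lévy distance `d_∞`. -/
def dInf {G : Type} (f g : G → EReal → ℝ) : ℝ := ⨆ x, dL (f x) (g x)

/-- Probabilistic Cauchy sequence: `D(z_n,z_p)(t) → H₀(t)` for all real `t`. -/
def PCauchy {G : Type} (M : PMSpace G) (z : ℕ → G) : Prop :=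
  ∀ t : ℝ, Tendsto (fun np : ℕ × ℕ => M.D (z np.1) (z np.2) (t : EReal))
    atTop (𝓝 (H0 (t : EReal)))

def PConvTo {G : Type} (M : PMSpace G) (z : ℕ → G) (w : G) : Prop :=
  ∀ t : ℝ, Tendsto (fun n => M.D (z n) w (t : EReal)) atTop (𝓝 (H0 (t : EReal)))

def PComplete {G : Type} (M : PMSpace G) : Prop :=
  ∀ z : ℕ → G, PCauchy M z → ∃ w, PConvTo M z w

/-- Compactness: complete and every strong `t`-neighborhood cover has a finite subcover. -/
def PCompact {G : Type} (M : PMSpace G) : Prop :=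
  PComplete M ∧ ∀ t : ℝ, 0 < t → ∃ A : Finset G, ∀ x : G, ∃ a ∈ A, M.D a x (t : EReal) > 1 - t

-- Auxiliary lemmas

/-- Step function with jump at `c` to value `a` (and value 1 at `⊤`). -/
def Sfun (c a : ℝ) : EReal → ℝ := fun s => if s ≤ (c:EReal) then 0 else if s = ⊤ then 1 else a

lemma Sfun_top (c a : ℝ) : Sfun c a ⊤ = 1 := by simp [Sfun]

lemma Sfun_of_le {c a : ℝ} {s : EReal} (h : s ≤ (c:EReal)) : Sfun c a s = 0 := by
  simp [Sfun, h]

lemma Sfun_coe_of_lt {c a t : ℝ} (h : c < t) : Sfun c a (t:EReal) = a := by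
  simp only [Sfun, EReal.coe_le_coe_iff, if_neg (not_le.mpr h), if_neg (EReal.coe_ne_top t)]

lemma Sfun_mono {c a : ℝ} (ha : 0 ≤ a) (ha1 : a ≤ 1) : Monotone (Sfun c a) := by
  intro s u hsu
  by_cases hu : u ≤ (c:EReal)
  · rw [Sfun_of_le (le_trans hsu hu), Sfun_of_le hu]
  by_cases hs : s ≤ (c:EReal)
  · rw [Sfun_of_le hs]
    simp only [Sfun, if_neg hu]
    split <;> linarith
  · simp only [Sfun, if_neg hu, if_neg hs]
    rcases eq_or_ne s ⊤ with rfl | hst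
    · rw [if_pos rfl, if_pos (top_le_iff.mp hsu)]
    · rw [if_neg hst]; split <;> linarith

lemma Sfun_distFun {c a : ℝ} (hc : 0 ≤ c) (ha : 0 ≤ a) (ha1 : a ≤ 1) : IsDistFun (Sfun c a) := by
  refine ⟨Sfun_mono ha ha1, ?_, ?_, ?_, ?_, ?_⟩
  · intro t
    simp only [Sfun]
    split
    · exact ⟨le_refl 0, zero_le_one⟩
    split
    · exact ⟨zero_le_one, le_refl 1⟩
    · exact ⟨ha, ha1⟩
  · intro x
    by_cases hx : (x:EReal) ≤ (c:EReal)
    · have : ∀ s ∈ Set.Iio (x:EReal), Sfun c a s = Sfun c a x := by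
        intro s hs
        rw [Sfun_of_le (le_trans (le_of_lt hs) hx), Sfun_of_le hx]
      exact Tendsto.congr' (eventuallyEq_of_mem self_mem_nhdsWithin fun s hs => (this s hs).symm)
        tendsto_const_nhds
    · push_neg at hx
      have hmem : Set.Ioi (c:EReal) ∈ 𝓝[Set.Iio (x:EReal)] (x:EReal) :=
        nhdsWithin_le_nhds (isOpen_Ioi.mem_nhds hx)
      have hIio : Set.Iio (x:EReal) ∈ 𝓝[Set.Iio (x:EReal)] (x:EReal) := self_mem_nhdsWithin
      have heq : ∀ᶠ s in 𝓝[Set.Iio (x:EReal)] (x:EReal), Sfun c a s = Sfun c a x := by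
        filter_upwards [hmem, hIio] with s hs1 hs2
        have hx' : c < x := EReal.coe_lt_coe_iff.mp hx
        rw [Sfun_coe_of_lt hx']
        have hs2' : s < ⊤ := lt_top_of_lt hs2
        simp only [Sfun, if_neg (not_le.mpr (Set.mem_Ioi.mp hs1)), if_neg hs2'.ne]
      exact Tendsto.congr' (heq.mono fun s h => h.symm) tendsto_const_nhds
  · exact Sfun_of_le bot_le
  · exact Sfun_top c a
  · exact Sfun_of_le (by exact_mod_cast hc)

lemma H0_eq : H0 = Sfun 0 1 := by
  funext s
  simp only [H0, Hstep, Sfun, EReal.coe_zero]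
  by_cases hs : s ≤ 0 <;> simp [hs]

lemma H0_distFun : IsDistFun H0 := by
  rw [H0_eq]; exact Sfun_distFun le_rfl zero_le_one le_rfl

lemma le_H0 {F : EReal → ℝ} (hF : IsDistFun F) : F ≤ H0 := by
  intro s
  simp only [H0, Hstep]
  split
  · rename_i h
    have : F s ≤ F (0:EReal) := hF.1 (le_trans h (by exact_mod_cast le_rfl))
    rw [hF.2.2.2.2.2] at this
    exact this
  · exact (hF.2.1 s).2

lemma one_mem_levySet {F L : EReal → ℝ} (hF : IsDistFun F) (hL : IsDistFun L) :
    (1:ℝ) ∈ levySet F L := by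
  refine ⟨one_pos, le_rfl, ?_, ?_⟩ <;>
  · intro t _ _
    have h1 := (hL.2.1 (t:EReal)).2
    have h2 := (hF.2.1 (t:EReal)).2
    have h3 := (hF.2.1 (((t+1:ℝ)):EReal)).1
    have h4 := (hL.2.1 (((t+1:ℝ)):EReal)).1
    linarith

lemma levySet_nonempty {F L : EReal → ℝ} (hF : IsDistFun F) (hL : IsDistFun L) :
    (levySet F L).Nonempty := ⟨1, one_mem_levySet hF hL⟩

lemma levySet_bddBelow (F L : EReal → ℝ) : BddBelow (levySet F L) :=
  ⟨0, fun h hh => le_of_lt hh.1⟩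

lemma dL_lt_of_mem {F L : EReal → ℝ} {h ε : ℝ} (hmem : h ∈ levySet F L) (hlt : h < ε) :
    dL F L < ε := lt_of_le_of_lt (csInf_le (levySet_bddBelow F L) hmem) hlt

/-- If `c ≥ t` and `a ≤ L t`, then the step `Sfun c a ≤ L`. -/
lemma Sfun_le {c a t : ℝ} {L : EReal → ℝ} (hL : IsDistFun L)
    (hct : t ≤ c) (haL : a ≤ L (t:EReal)) : Sfun c a ≤ L := by
  intro s
  simp only [Sfun]
  split
  · exact (hL.2.1 s).1
  rename_i hs
  split
  · rename_i h; rw [h, hL.2.2.2.2.1]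
  · push_neg at hs
    refine le_trans haL (hL.1 ?_)
    exact le_of_lt (lt_of_le_of_lt (by exact_mod_cast hct) hs)

lemma Sfun_le_Sfun {c₁ c₂ a₁ a₂ : ℝ} (hc : c₁ ≤ c₂) (ha : a₂ ≤ a₁) (ha1 : 0 ≤ a₁) :
    Sfun c₂ a₂ ≤ Sfun c₁ a₁ := by
  intro s
  by_cases hs : s ≤ (c₂:EReal)
  · rw [Sfun_of_le hs]
    simp only [Sfun]; split
    · rfl
    split
    · exact zero_le_one
    · exact ha1
  · have hs1 : ¬ s ≤ (c₁:EReal) := fun h => hs (le_trans h (by exact_mod_cast hc))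
    simp only [Sfun, if_neg hs, if_neg hs1]
    split
    · rfl
    · exact ha

/-- If `h ∈ levySet F H0` then `Sfun h (1-h) ≤ F`. -/
lemma Sfun_le_of_levy {F : EReal → ℝ} {h : ℝ} (hF : IsDistFun F)
    (hmem : h ∈ levySet F H0) : Sfun h (1-h) ≤ F := by
  obtain ⟨hh0, hh1, hcond, -⟩ := hmem
  intro s
  by_cases hs : s ≤ (h:EReal)
  · rw [Sfun_of_le hs]; exact (hF.2.1 s).1
  push_neg at hs
  rcases eq_or_ne s ⊤ with rfl | hst
  · simp only [Sfun, if_neg (not_le.mpr hs), if_pos rfl]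
    rw [hF.2.2.2.2.1]
    simp
  · -- s is a real number > h
    lift s to ℝ using ⟨hst, ne_bot_of_gt hs⟩
    have hsr : h < s := EReal.coe_lt_coe_iff.mp hs
    rw [Sfun_coe_of_lt hsr]
    set t : ℝ := min (s - h) (1/(2*h)) with ht
    have ht0 : 0 < t := lt_min (by linarith) (by positivity)
    have htlt : t < 1/h := lt_of_le_of_lt (min_le_right _ _) (by
      rw [div_lt_div_iff₀ (by positivity) hh0]; linarith)
    have hkey := hcond t ht0 htlt
    have hH : H0 (t:EReal) = 1 := by
      simp only [H0, Hstep, EReal.coe_zero.symm]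
      rw [if_neg]
      exact fun hle => absurd (EReal.coe_le_coe_iff.mp (by exact_mod_cast hle)) (not_le.mpr ht0)
    rw [hH] at hkey
    have hth : t + h ≤ s := by
      have := min_le_left (s-h) (1/(2*h)); linarith [ht ▸ this]
    have := hF.1 (show ((t+h:ℝ):EReal) ≤ (s:EReal) from by exact_mod_cast hth)
    linarith

lemma Sfun_continuousAt {c a x : ℝ} (hx : c < x) : ContinuousAt (Sfun c a) (x:EReal) := by
  have hmem : Set.Ioo (c:EReal) ⊤ ∈ 𝓝 (x:EReal) :=
    isOpen_Ioo.mem_nhds ⟨by exact_mod_cast hx, EReal.coe_lt_top x⟩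
  have heq : ∀ᶠ s in 𝓝 (x:EReal), Sfun c a s = a := by
    filter_upwards [hmem] with s hs
    simp only [Sfun, if_neg (not_le.mpr hs.1), if_neg hs.2.ne]
  have hx' : Sfun c a (x:EReal) = a := Sfun_coe_of_lt hx
  rw [ContinuousAt, hx']
  exact Tendsto.congr' (heq.mono fun s h => h.symm) tendsto_const_nhds

/-- The approximating sequence converging to `H0`. -/
def Kseq (n : ℕ) : EReal → ℝ := Sfun (1/(n+1)) (1 - 1/(n+1))

lemma Kseq_distFun (n : ℕ) : IsDistFun (Kseq n) := by
  have h1 : (0:ℝ) < 1/(n+1) := by positivity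
  have h2 : (1:ℝ)/(n+1) ≤ 1 := by
    rw [div_le_one (by positivity)]; linarith [Nat.cast_nonneg (α := ℝ) n]
  exact Sfun_distFun (le_of_lt h1) (by linarith) (by linarith)

lemma Kseq_weakConv : WeakConv Kseq H0 := by
  intro t _
  rcases le_or_gt t 0 with ht | ht
  · have hv : ∀ n, Kseq n (t:EReal) = 0 := by
      intro n
      apply Sfun_of_le
      exact_mod_cast le_trans ht (by positivity)
    have hH : H0 (t:EReal) = 0 := by
      simp only [H0, Hstep]
      rw [if_pos (by exact_mod_cast ht)]
    rw [hH]
    exact Tendsto.congr (fun n => (hv n).symm) tendsto_const_nhds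
  · have hH : H0 (t:EReal) = 1 := by
      simp only [H0, Hstep]
      rw [if_neg (by exact_mod_cast not_le.mpr ht)]
    rw [hH]
    have hlim : Tendsto (fun n : ℕ => 1 - 1/((n:ℝ)+1)) atTop (𝓝 1) := by
      have := tendsto_one_div_add_atTop_nhds_zero_nat (𝕜 := ℝ)
      have h2 : Tendsto (fun n : ℕ => 1 - 1/((n:ℝ)+1)) atTop (𝓝 (1 - 0)) :=
        tendsto_const_nhds.sub this
      simpa using h2
    have hev : ∀ᶠ n in atTop, Kseq n (t:EReal) = 1 - 1/((n:ℝ)+1) := by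
      obtain ⟨N, hN⟩ := exists_nat_gt (1/t)
      filter_upwards [eventually_ge_atTop N] with n hn
      apply Sfun_coe_of_lt
      rw [div_lt_iff₀ (by positivity)]
      have h1t : 1/t < (n:ℝ)+1 := lt_of_lt_of_le hN (by exact_mod_cast Nat.le_succ_of_le hn)
      calc (1:ℝ) = t * (1/t) := by field_simp
        _ < t * ((n:ℝ)+1) := by
            exact mul_lt_mul_of_pos_left h1t ht
    exact Tendsto.congr' (hev.mono fun n h => h.symm) hlim

lemma star_mono_right {star : TriOp} (htri : IsTriangleFn star) {F L L' : EReal → ℝ} (hF : IsDistFun F) (hL : IsDistFun L)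
    (hL' : IsDistFun L') (h : L ≤ L') : star F L ≤ star F L' := by
  rw [htri.2.1 F L hF hL, htri.2.1 F L' hF hL']
  exact htri.2.2.2.2 L L' F hL hL' hF h

lemma star_H0_left {star : TriOp} (htri : IsTriangleFn star) {L : EReal → ℝ} (hL : IsDistFun L) : star H0 L = L := by
  rw [htri.2.1 H0 L H0_distFun hL]
  exact htri.2.2.2.1 L hL

lemma core_unif {star : TriOp} (htri : IsTriangleFn star) (hc : StarContinuous star)
    {ε : ℝ} (hε0 : 0 < ε) (hε1 : ε ≤ 1) :
    ∃ n : ℕ, ∀ L, IsDistFun L → ∀ t : ℝ, 0 < t → t < 1/ε →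
      L (t:EReal) ≤ star (Kseq n) L (((t+ε:ℝ)):EReal) + ε := by
  set δ : ℝ := ε/2 with hδ
  have hδ0 : 0 < δ := by positivity
  set M₁ : ℕ := ⌊(1/ε)/δ⌋₊ with hM₁
  set M₂ : ℕ := ⌊1/δ⌋₊ with hM₂
  have hSd : ∀ (i j : ℕ), (j:ℝ)*δ ≤ 1 → IsDistFun (Sfun (((i:ℝ)+1)*δ) ((j:ℝ)*δ)) :=
    fun i j hj => Sfun_distFun (by positivity) (by positivity) hj
  have claim : ∀ i ∈ Finset.range (M₁+1), ∀ j ∈ Finset.range (M₂+1),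
      ∀ᶠ n in atTop, ((j:ℝ)*δ - δ) <
        star (Kseq n) (Sfun (((i:ℝ)+1)*δ) ((j:ℝ)*δ)) (((i:ℝ)*δ+ε : ℝ) : EReal) := by
    intro i _ j hj
    have hjM : (j:ℝ)*δ ≤ 1 := by
      have hj' : (j:ℝ) ≤ (M₂:ℝ) := by exact_mod_cast Nat.lt_succ_iff.mp (Finset.mem_range.mp hj)
      have : (M₂:ℝ) ≤ 1/δ := Nat.floor_le (by positivity)
      calc (j:ℝ)*δ ≤ (1/δ)*δ := by nlinarith
        _ = 1 := by field_simp
    set S := Sfun (((i:ℝ)+1)*δ) ((j:ℝ)*δ) with hS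
    have hSdist : IsDistFun S := hSd i j hjM
    have hwc : WeakConv (fun n => star (Kseq n) S) (star H0 S) :=
      hc Kseq (fun _ => S) H0 S Kseq_distFun (fun _ => hSdist) H0_distFun hSdist
        Kseq_weakConv (fun t _ => tendsto_const_nhds)
    rw [star_H0_left htri hSdist] at hwc
    have hx : ((i:ℝ)+1)*δ < (i:ℝ)*δ+ε := by nlinarith
    have hca : ContinuousAt S (((i:ℝ)*δ+ε : ℝ) : EReal) := Sfun_continuousAt hx
    have hval : S (((i:ℝ)*δ+ε : ℝ) : EReal) = (j:ℝ)*δ := Sfun_coe_of_lt hx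
    have htend := hwc ((i:ℝ)*δ+ε) hca
    rw [hval] at htend
    exact htend.eventually (eventually_gt_nhds (by linarith))
  have claim2 : ∀ᶠ n in atTop, ∀ i ∈ Finset.range (M₁+1), ∀ j ∈ Finset.range (M₂+1),
      ((j:ℝ)*δ - δ) < star (Kseq n) (Sfun (((i:ℝ)+1)*δ) ((j:ℝ)*δ)) (((i:ℝ)*δ+ε : ℝ) : EReal) :=
    (eventually_all_finset _).mpr fun i hi => (eventually_all_finset _).mpr (claim i hi)
  obtain ⟨n, hn⟩ := claim2.exists
  refine ⟨n, ?_⟩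
  intro L hL t ht0 ht1
  obtain ⟨hLt0, hLt1⟩ := hL.2.1 (t:EReal)
  set i : ℕ := ⌊t/δ⌋₊ with hi
  set j : ℕ := ⌊L (t:EReal)/δ⌋₊ with hj
  have hi_le : (i:ℝ)*δ ≤ t := by
    have := Nat.floor_le (show (0:ℝ) ≤ t/δ by positivity)
    calc (i:ℝ)*δ ≤ (t/δ)*δ := by nlinarith
      _ = t := by field_simp
  have hi_lt : t < ((i:ℝ)+1)*δ := by
    have := Nat.lt_floor_add_one (t/δ)
    calc t = (t/δ)*δ := by field_simp
      _ < ((i:ℝ)+1)*δ := by nlinarith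
  have hj_le : (j:ℝ)*δ ≤ L (t:EReal) := by
    have := Nat.floor_le (show (0:ℝ) ≤ L (t:EReal)/δ by positivity)
    calc (j:ℝ)*δ ≤ (L (t:EReal)/δ)*δ := by nlinarith
      _ = L (t:EReal) := by field_simp
  have hj_lt : L (t:EReal) < ((j:ℝ)+1)*δ := by
    have := Nat.lt_floor_add_one (L (t:EReal)/δ)
    calc L (t:EReal) = (L (t:EReal)/δ)*δ := by field_simp
      _ < ((j:ℝ)+1)*δ := by nlinarith
  have ht1' : t ≤ 1/ε := le_of_lt ht1
  have hiM : i ∈ Finset.range (M₁+1) := by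
    rw [Finset.mem_range, Nat.lt_succ_iff]
    exact Nat.floor_le_floor (by gcongr)
  have hjM : j ∈ Finset.range (M₂+1) := by
    rw [Finset.mem_range, Nat.lt_succ_iff]
    exact Nat.floor_le_floor (by gcongr)
  have hjM1 : (j:ℝ)*δ ≤ 1 := le_trans hj_le hLt1
  set S := Sfun (((i:ℝ)+1)*δ) ((j:ℝ)*δ) with hS
  have hSdist : IsDistFun S := hSd i j hjM1
  have hkey := hn i hiM j hjM
  have hSL : S ≤ L := Sfun_le hL (le_of_lt hi_lt) hj_le
  have h1 : star (Kseq n) S (((i:ℝ)*δ+ε : ℝ) : EReal) ≤ star (Kseq n) S (((t+ε : ℝ)) : EReal) :=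
    (htri.1 _ _ (Kseq_distFun n) hSdist).1 (by exact_mod_cast by linarith : (((i:ℝ)*δ+ε : ℝ) : EReal) ≤ (((t+ε : ℝ)) : EReal))
  have h2 : star (Kseq n) S (((t+ε : ℝ)) : EReal) ≤ star (Kseq n) L (((t+ε : ℝ)) : EReal) :=
    star_mono_right htri (Kseq_distFun n) hSdist hL hSL _
  have hδδ : δ + δ = ε := by rw [hδ]; ring
  linarith

/-- `Lip¹_⋆(G,Δ⁺)` is uniformly equicontinuous when `⋆` is continuous. -/
theorem stmt14 {G : Type} (M : PMSpace G) (hc : StarContinuous M.star) :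
    ∀ ε > (0:ℝ), ∃ η > (0:ℝ), ∀ f : G → EReal → ℝ, PLip M f → ∀ x y : G,
      dL (M.D x y) H0 < η → dL (f x) (f y) < ε := by
  intro ε hε
  set ε' : ℝ := min ε 1 / 2 with hε'
  have hmin : 0 < min ε 1 := lt_min hε one_pos
  have hε'0 : 0 < ε' := by rw [hε']; linarith
  have hε'1 : ε' ≤ 1 := by
    have := min_le_right ε 1; rw [hε']; linarith
  have hε'ε : ε' < ε := by
    have := min_le_left ε 1; rw [hε']; linarith
  obtain ⟨n, hn⟩ := core_unif M.star_tri hc hε'0 hε'1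
  refine ⟨1/(n+1), by positivity, ?_⟩
  intro f hf x y hxy
  obtain ⟨h, hmem, hlt⟩ :=
    exists_lt_of_csInf_lt (levySet_nonempty (M.D_mem x y) H0_distFun) hxy
  have hK : Kseq n ≤ M.D x y := by
    refine le_trans ?_ (Sfun_le_of_levy (M.D_mem x y) hmem)
    exact Sfun_le_Sfun hlt.le (by linarith) (by linarith [hmem.2.1])
  have hK' : Kseq n ≤ M.D y x := by rw [M.D_symm y x]; exact hK
  have key : ∀ u v : G, Kseq n ≤ M.D u v → levyCond (f u) (f v) ε' := by
    intro u v hKuv t ht0 ht1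
    have h1 := hn (f v) (hf.1 v) t ht0 ht1
    have h2 : M.star (Kseq n) (f v) ≤ M.star (M.D u v) (f v) :=
      M.star_tri.2.2.2.2 _ _ _ (Kseq_distFun n) (M.D_mem u v) (hf.1 v) hKuv
    have h3 := hf.2 u v
    have h2' := h2 (((t+ε':ℝ)):EReal)
    have h3' := h3 (((t+ε':ℝ)):EReal)
    linarith
  have hmem' : ε' ∈ levySet (f x) (f y) := ⟨hε'0, hε'1, key x y hK, key y x hK'⟩
  exact dL_lt_of_mem hmem' hε'ε
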